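/- The canonical monoid homomorphism ι from the monoid M = ⟨a, b, c ∣ a²b = ba², b²a = ab², a²c = ca², b²c = cb², a²b² = c²⟩⁺ to the group G with the same presentation is injective. -/

import Mathlib

/-- Relations of the presentation `⟨a,b,c ∣ a²b=ba², b²a=ab², a²c=ca², b²c=cb², a²b²=c²⟩`
of the braid group `B₂(Σ_{1,0})`, as elements of the free group on `a = 0`, `b = 1`, `c = 2`. -/
def grels : Set (FreeGroup (Fin 3)) :=
  { FreeGroup.of 0 ^ 2 * FreeGroup.of 1 * (FreeGroup.of 1 * FreeGroup.of 0 ^ 2)⁻¹,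
    FreeGroup.of 1 ^ 2 * FreeGroup.of 0 * (FreeGroup.of 0 * FreeGroup.of 1 ^ 2)⁻¹,
    FreeGroup.of 0 ^ 2 * FreeGroup.of 2 * (FreeGroup.of 2 * FreeGroup.of 0 ^ 2)⁻¹,
    FreeGroup.of 1 ^ 2 * FreeGroup.of 2 * (FreeGroup.of 2 * FreeGroup.of 1 ^ 2)⁻¹,
    FreeGroup.of 0 ^ 2 * FreeGroup.of 1 ^ 2 * (FreeGroup.of 2 ^ 2)⁻¹ }

/-- Relations `a² = b² = c² = 1` of the universal Coxeter group `W(a,b,c)`. -/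
def wrels : Set (FreeGroup (Fin 3)) :=
  { FreeGroup.of 0 ^ 2, FreeGroup.of 1 ^ 2, FreeGroup.of 2 ^ 2 }

/-- The braid group `B₂(Σ_{1,0})` via the presentation above. -/
abbrev G := PresentedGroup grels

/-- The universal Coxeter group `W(a,b,c) = ℤ/2 * ℤ/2 * ℤ/2`. -/
abbrev W := PresentedGroup wrels

def ga : G := PresentedGroup.of 0
def gb : G := PresentedGroup.of 1
def gc : G := PresentedGroup.of 2
def wa : W := PresentedGroup.of 0
def wb : W := PresentedGroup.of 1
def wc : W := PresentedGroup.of 2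
/-- The defining relations of the positive monoid presentation
`⟨a,b,c ∣ a²b=ba², b²a=ab², a²c=ca², b²c=cb², a²b²=c²⟩⁺`, on the free monoid
on `a = 0`, `b = 1`, `c = 2`. -/
inductive mrels : FreeMonoid (Fin 3) → FreeMonoid (Fin 3) → Prop
  | ab : mrels (.of 0 * .of 0 * .of 1) (.of 1 * (.of 0 * .of 0))
  | ba : mrels (.of 1 * .of 1 * .of 0) (.of 0 * (.of 1 * .of 1))
  | ac : mrels (.of 0 * .of 0 * .of 2) (.of 2 * (.of 0 * .of 0))
  | bc : mrels (.of 1 * .of 1 * .of 2) (.of 2 * (.of 1 * .of 1))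
  | c2 : mrels (.of 0 * .of 0 * (.of 1 * .of 1)) (.of 2 * .of 2)

/-- The positive monoid `B₂⁺(Σ_{1,0})` given by the presentation above. -/
abbrev M := PresentedMonoid mrels

def ma : M := PresentedMonoid.of mrels 0
def mb : M := PresentedMonoid.of mrels 1
def mc : M := PresentedMonoid.of mrels 2

/-! ### Auxiliary material -/

set_option linter.unusedVariables false

/-- squares of generators are trivial in `W`. -/
lemma wsq (i : Fin 3) : (PresentedGroup.of i : W) ^ 2 = 1 := by
  have : (PresentedGroup.of i : W) ^ 2 = PresentedGroup.mk wrels (FreeGroup.of i ^ 2) := by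
    simp [PresentedGroup.of, map_pow]
  rw [this]
  refine (QuotientGroup.eq_one_iff _).mpr (Subgroup.subset_normalClosure ?_)
  fin_cases i <;> simp [wrels]

/-- The projection `G → W`. -/
def pW : G →* W :=
  PresentedGroup.toGroup (f := fun i => (PresentedGroup.of i : W)) (by
    intro r hr
    rcases hr with rfl | rfl | rfl | rfl | rfl <;>
      simp [map_pow, wsq])

@[simp] lemma pW_of (i : Fin 3) : pW (PresentedGroup.of i) = PresentedGroup.of i :=
  PresentedGroup.toGroup.of _

/-- Weights for `ℓ_a` : `a ↦ 1, b ↦ 0, c ↦ 1`. -/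
def f1 : Fin 3 → Multiplicative ℤ := ![Multiplicative.ofAdd 1, 1, Multiplicative.ofAdd 1]
/-- Weights for `ℓ_b` : `a ↦ 0, b ↦ 1, c ↦ 1`. -/
def f2 : Fin 3 → Multiplicative ℤ := ![1, Multiplicative.ofAdd 1, Multiplicative.ofAdd 1]

/-- The abelianized length `ℓ_a` on `G`. -/
def la : G →* Multiplicative ℤ :=
  PresentedGroup.toGroup (f := f1) (by
    intro r hr
    rcases hr with rfl | rfl | rfl | rfl | rfl <;>
      (simp [map_pow, f1] <;> group))

/-- The abelianized length `ℓ_b` on `G`. -/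
def lb : G →* Multiplicative ℤ :=
  PresentedGroup.toGroup (f := f2) (by
    intro r hr
    rcases hr with rfl | rfl | rfl | rfl | rfl <;>
      (simp [map_pow, f2] <;> group))

@[simp] lemma la_of (i : Fin 3) : la (PresentedGroup.of i) = f1 i :=
  PresentedGroup.toGroup.of _
@[simp] lemma lb_of (i : Fin 3) : lb (PresentedGroup.of i) = f2 i :=
  PresentedGroup.toGroup.of _

/-! ### The action of `W` on alternating words -/

/-- Alternating words over the alphabet `Fin 3`. -/
def Alt : Type := { l : List (Fin 3) // l.Chain' (· ≠ ·) }

/-- Toggle: prepend `x`, cancelling against an initial `x`. -/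
def togl (x : Fin 3) : List (Fin 3) → List (Fin 3)
  | [] => [x]
  | y :: ys => if y = x then ys else x :: y :: ys

lemma togl_chain (x : Fin 3) {l : List (Fin 3)} (h : l.Chain' (· ≠ ·)) :
    (togl x l).Chain' (· ≠ ·) := by
  cases l with
  | nil => simp [togl, List.Chain']
  | cons y ys =>
      by_cases hxy : y = x
      · simpa [togl, hxy, List.Chain'] using h.tail
      · simpa [togl, hxy, List.Chain'] using (⟨fun e => hxy e.symm, h⟩ : x ≠ y ∧ (y :: ys).Chain' (· ≠ ·))

lemma togl_togl (x : Fin 3) {l : List (Fin 3)} (h : l.Chain' (· ≠ ·)) :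
    togl x (togl x l) = l := by
  cases l with
  | nil => simp [togl]
  | cons y ys =>
      by_cases hxy : y = x
      · subst hxy
        cases ys with
        | nil => simp [togl]
        | cons z zs =>
            have hz : y ≠ z := (List.isChain_cons_cons.1 h).1
            simp [togl]
            exact fun e => absurd e.symm hz
      · simp [togl, hxy]

/-- The toggle as an involutive map on alternating words. -/
def tog (x : Fin 3) : Alt → Alt := fun l => ⟨togl x l.1, togl_chain x l.2⟩

lemma tog_involutive (x : Fin 3) : Function.Involutive (tog x) := by
  intro l
  exact Subtype.ext (togl_togl x l.2)

/-- The toggle as a permutation of alternating words. -/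
def togP (x : Fin 3) : Equiv.Perm Alt := (tog_involutive x).toPerm

/-- The action of `W` on alternating words. -/
def ω : W →* Equiv.Perm Alt :=
  PresentedGroup.toGroup (f := togP) (by
    intro r hr
    have key : ∀ x : Fin 3, togP x * togP x = 1 := by
      intro x
      ext l
      exact tog_involutive x l
    rcases hr with rfl | rfl | rfl | rfl <;>
      simp [map_pow, pow_two, key]
    )

@[simp] lemma ω_of (i : Fin 3) : ω (PresentedGroup.of i) = togP i :=
  PresentedGroup.toGroup.of _

/-- Product of a word in `W`. -/
def wprod (l : List (Fin 3)) : W := (l.map fun i => (PresentedGroup.of i : W)).prod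

@[simp] lemma wprod_nil : wprod [] = 1 := rfl
@[simp] lemma wprod_cons (x : Fin 3) (l : List (Fin 3)) :
    wprod (x :: l) = PresentedGroup.of x * wprod l := rfl

/-- The empty alternating word. -/
def altNil : Alt := ⟨[], List.isChain_nil⟩

lemma omega_wprod {l : List (Fin 3)} (h : l.Chain' (· ≠ ·)) :
    (ω (wprod l) altNil).1 = l := by
  induction l with
  | nil => simp [altNil]; rfl
  | cons x l ih =>
      have hl := h.tail
      rw [wprod_cons, map_mul]
      have : ω (wprod l) altNil = ⟨l, hl⟩ := Subtype.ext (ih hl)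
      simp only [Equiv.Perm.coe_mul, Function.comp_apply, this, ω_of]
      show (tog x ⟨l, hl⟩).1 = x :: l
      cases l with
      | nil => simp [tog, togl]
      | cons y ys =>
          have hxy : x ≠ y := (List.isChain_cons_cons.1 h).1
          simp [tog, togl]
          exact fun e => absurd e.symm hxy

/-- Alternating words are distinguished by `W`. -/
lemma wprod_inj {l l' : List (Fin 3)} (h : l.Chain' (· ≠ ·)) (h' : l'.Chain' (· ≠ ·))
    (he : wprod l = wprod l') : l = l' := by
  have := omega_wprod h
  rw [he, omega_wprod h'] at this
  exact this.symm

/-! ### The monoid `M` -/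

lemma msound {x y : FreeMonoid (Fin 3)} (h : mrels x y) :
    PresentedMonoid.mk mrels x = PresentedMonoid.mk mrels y :=
  Quotient.sound (ConGen.Rel.of _ _ h)

lemma rab : ma * ma * mb = mb * (ma * ma) := msound mrels.ab
lemma rba : mb * mb * ma = ma * (mb * mb) := msound mrels.ba
lemma rac : ma * ma * mc = mc * (ma * ma) := msound mrels.ac
lemma rbc : mb * mb * mc = mc * (mb * mb) := msound mrels.bc
lemma rc2 : ma * ma * (mb * mb) = mc * mc := msound mrels.c2

/-- Product of a word in `M`. -/
def mprod (l : List (Fin 3)) : M := (l.map (PresentedMonoid.of mrels)).prod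

@[simp] lemma mprod_nil : mprod [] = 1 := rfl
@[simp] lemma mprod_cons (x : Fin 3) (l : List (Fin 3)) :
    mprod (x :: l) = PresentedMonoid.of mrels x * mprod l := rfl

lemma mk_eq_mprod (l : List (Fin 3)) :
    PresentedMonoid.mk mrels (FreeMonoid.ofList l) = mprod l := by
  induction l with
  | nil => rfl
  | cons x l ih => rw [FreeMonoid.ofList_cons, map_mul, ih]; rfl

lemma exists_mprod (m : M) : ∃ l : List (Fin 3), m = mprod l :=
  PresentedMonoid.inductionOn m fun w =>
    ⟨w.toList, by rw [← mk_eq_mprod, FreeMonoid.ofList_toList]⟩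

lemma asq_comm_of (x : Fin 3) :
    ma * ma * PresentedMonoid.of mrels x = PresentedMonoid.of mrels x * (ma * ma) := by
  fin_cases x
  · show ma * ma * ma = ma * (ma * ma); rw [mul_assoc]
  · exact rab
  · exact rac

lemma bsq_comm_of (x : Fin 3) :
    mb * mb * PresentedMonoid.of mrels x = PresentedMonoid.of mrels x * (mb * mb) := by
  fin_cases x
  · exact rba
  · show mb * mb * mb = mb * (mb * mb); rw [mul_assoc]
  · exact rbc

lemma asq_comm (m : M) : Commute (ma * ma) m := by
  obtain ⟨l, rfl⟩ := exists_mprod m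
  induction l with
  | nil => exact Commute.one_right _
  | cons x l ih =>
      rw [mprod_cons]
      exact Commute.mul_right (asq_comm_of x) ih

lemma bsq_comm (m : M) : Commute (mb * mb) m := by
  obtain ⟨l, rfl⟩ := exists_mprod m
  induction l with
  | nil => exact Commute.one_right _
  | cons x l ih =>
      rw [mprod_cons]
      exact Commute.mul_right (bsq_comm_of x) ih

/-- One step of normal-form reduction: multiplying an alternating word by a generator. -/
lemma step (x : Fin 3) {l : List (Fin 3)} (h : l.Chain' (· ≠ ·)) :
    ∃ (p q : ℕ) (l' : List (Fin 3)), l'.Chain' (· ≠ ·) ∧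
      PresentedMonoid.of mrels x * mprod l =
        (ma * ma) ^ p * ((mb * mb) ^ q * mprod l') := by
  cases l with
  | nil => exact ⟨0, 0, [x], List.isChain_singleton x, by simp⟩
  | cons y ys =>
      by_cases hxy : x = y
      · subst hxy
        have hys := h.tail
        fin_cases x
        · refine ⟨1, 0, ys, hys, ?_⟩
          show ma * (ma * mprod ys) = (ma * ma) ^ 1 * ((mb * mb) ^ 0 * mprod ys)
          simp [mul_assoc]
        · refine ⟨0, 1, ys, hys, ?_⟩
          show mb * (mb * mprod ys) = (ma * ma) ^ 0 * ((mb * mb) ^ 1 * mprod ys)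
          simp [mul_assoc]
        · refine ⟨1, 1, ys, hys, ?_⟩
          show mc * (mc * mprod ys) = (ma * ma) ^ 1 * ((mb * mb) ^ 1 * mprod ys)
          simp only [pow_one]
          rw [← mul_assoc, ← rc2, mul_assoc (ma * ma), ← mul_assoc]
      · exact ⟨0, 0, x :: y :: ys, List.isChain_cons_cons.2 ⟨hxy, h⟩, by simp⟩

/-- Every element of `M` has a normal form `a^(2i) b^(2j) w` with `w` alternating. -/
lemma nf_exists (m : M) :
    ∃ (i j : ℕ) (l : List (Fin 3)), l.Chain' (· ≠ ·) ∧
      m = (ma * ma) ^ i * ((mb * mb) ^ j * mprod l) := by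
  obtain ⟨l, rfl⟩ := exists_mprod m
  induction l with
  | nil => exact ⟨0, 0, [], List.isChain_nil, by simp⟩
  | cons x l ih =>
      obtain ⟨i, j, l', hl', heq⟩ := ih
      obtain ⟨p, q, l'', hl'', heq'⟩ := step x hl'
      refine ⟨i + p, j + q, l'', hl'', ?_⟩
      have c1 : Commute ((ma * ma) ^ i) (PresentedMonoid.of mrels x) :=
        ((asq_comm _).symm.pow_right i).symm
      have c2 : Commute ((mb * mb) ^ j) (PresentedMonoid.of mrels x) :=
        ((bsq_comm _).symm.pow_right j).symm
      have c3 : Commute ((mb * mb) ^ j) ((ma * ma) ^ p) :=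
        ((bsq_comm _).pow_right p).pow_left j
      calc mprod (x :: l)
          = PresentedMonoid.of mrels x * ((ma * ma) ^ i * ((mb * mb) ^ j * mprod l')) := by
            rw [mprod_cons, heq]
        _ = (ma * ma) ^ i * ((mb * mb) ^ j * (PresentedMonoid.of mrels x * mprod l')) := by
            rw [(c1.symm).left_comm, (c2.symm).left_comm]
        _ = (ma * ma) ^ i * ((mb * mb) ^ j *
              ((ma * ma) ^ p * ((mb * mb) ^ q * mprod l''))) := by rw [heq']
        _ = (ma * ma) ^ (i + p) * ((mb * mb) ^ (j + q) * mprod l'') := by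
            rw [pow_add, pow_add, (c3).left_comm]
            simp [mul_assoc]

/-- Product of a word in `G`. -/
def gprod (l : List (Fin 3)) : G := (l.map fun i => (PresentedGroup.of i : G)).prod

lemma pW_gprod (l : List (Fin 3)) : pW (gprod l) = wprod l := by
  rw [gprod, map_list_prod, wprod, List.map_map]
  simp [Function.comp_def]

lemma la_gprod (l : List (Fin 3)) : la (gprod l) = (l.map f1).prod := by
  rw [gprod, map_list_prod, List.map_map]
  simp [Function.comp_def]

lemma lb_gprod (l : List (Fin 3)) : lb (gprod l) = (l.map f2).prod := by
  rw [gprod, map_list_prod, List.map_map]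
  simp [Function.comp_def]

theorem stmt_17 (ι : M →* G) (hιa : ι ma = ga) (hιb : ι mb = gb) (hιc : ι mc = gc) :
    Function.Injective ι := by
  have ι_of : ∀ x : Fin 3, ι (PresentedMonoid.of mrels x) = PresentedGroup.of x := by
    intro x
    fin_cases x
    · exact hιa
    · exact hιb
    · exact hιc
  have ι_mprod : ∀ l : List (Fin 3), ι (mprod l) = gprod l := by
    intro l
    induction l with
    | nil => simp [gprod]
    | cons x l ih => rw [mprod_cons, map_mul, ι_of, ih]; rfl
  have ι_nf : ∀ (i j : ℕ) (l : List (Fin 3)),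
      ι ((ma * ma) ^ i * ((mb * mb) ^ j * mprod l)) =
        (ga * ga) ^ i * ((gb * gb) ^ j * gprod l) := by
    intro i j l
    rw [map_mul, map_mul, map_pow, map_pow, map_mul, map_mul, hιa, hιb, ι_mprod]
  have waa : (PresentedGroup.of 0 : W) * PresentedGroup.of 0 = 1 := by
    rw [← pow_two]; exact wsq 0
  have wbb : (PresentedGroup.of 1 : W) * PresentedGroup.of 1 = 1 := by
    rw [← pow_two]; exact wsq 1
  have pW_nf : ∀ (i j : ℕ) (l : List (Fin 3)),
      pW ((ga * ga) ^ i * ((gb * gb) ^ j * gprod l)) = wprod l := by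
    intro i j l
    rw [map_mul, map_mul, map_pow, map_pow, map_mul, map_mul, pW_gprod]
    show (pW (PresentedGroup.of 0) * pW (PresentedGroup.of 0)) ^ i *
      ((pW (PresentedGroup.of 1) * pW (PresentedGroup.of 1)) ^ j * wprod l) = wprod l
    rw [pW_of, pW_of, waa, wbb, one_pow, one_pow, one_mul, one_mul]
  have la_nf : ∀ (i j : ℕ) (l : List (Fin 3)),
      la ((ga * ga) ^ i * ((gb * gb) ^ j * gprod l)) =
        Multiplicative.ofAdd (2 * (i : ℤ)) * (l.map f1).prod := by
    intro i j l
    rw [map_mul, map_mul, map_pow, map_pow, map_mul, map_mul, la_gprod]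
    show (la (PresentedGroup.of 0) * la (PresentedGroup.of 0)) ^ i *
      ((la (PresentedGroup.of 1) * la (PresentedGroup.of 1)) ^ j * (l.map f1).prod) = _
    rw [la_of, la_of]
    have h0 : f1 0 * f1 0 = Multiplicative.ofAdd (2 : ℤ) := by
      simp [f1, ← ofAdd_add]
    have h1 : f1 1 * f1 1 = 1 := by simp [f1]
    rw [h0, h1, one_pow, one_mul, ← ofAdd_nsmul]
    norm_num [mul_comm]
  have lb_nf : ∀ (i j : ℕ) (l : List (Fin 3)),
      lb ((ga * ga) ^ i * ((gb * gb) ^ j * gprod l)) =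
        Multiplicative.ofAdd (2 * (j : ℤ)) * (l.map f2).prod := by
    intro i j l
    rw [map_mul, map_mul, map_pow, map_pow, map_mul, map_mul, lb_gprod]
    show (lb (PresentedGroup.of 0) * lb (PresentedGroup.of 0)) ^ i *
      ((lb (PresentedGroup.of 1) * lb (PresentedGroup.of 1)) ^ j * (l.map f2).prod) = _
    rw [lb_of, lb_of]
    have h0 : f2 1 * f2 1 = Multiplicative.ofAdd (2 : ℤ) := by
      simp [f2, ← ofAdd_add]
    have h1 : f2 0 * f2 0 = 1 := by simp [f2]
    rw [h0, h1, one_pow, one_mul, ← ofAdd_nsmul]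
    norm_num [mul_comm]
  intro m m' hmm
  obtain ⟨i, j, l, hl, rfl⟩ := nf_exists m
  obtain ⟨i', j', l', hl', rfl⟩ := nf_exists m'
  rw [ι_nf, ι_nf] at hmm
  -- the alternating words agree
  have hW : wprod l = wprod l' := by
    rw [← pW_nf i j l, ← pW_nf i' j' l', hmm]
  have hll : l = l' := wprod_inj hl hl' hW
  subst hll
  -- the exponents agree
  have hla := congrArg la hmm
  rw [la_nf, la_nf] at hla
  have hia : Multiplicative.ofAdd (2 * (i : ℤ)) = Multiplicative.ofAdd (2 * (i' : ℤ)) :=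
    mul_right_cancel hla
  have hi : i = i' := by
    have := Multiplicative.ofAdd.injective hia
    omega
  have hlb := congrArg lb hmm
  rw [lb_nf, lb_nf] at hlb
  have hjb : Multiplicative.ofAdd (2 * (j : ℤ)) = Multiplicative.ofAdd (2 * (j' : ℤ)) :=
    mul_right_cancel hlb
  have hj : j = j' := by
    have := Multiplicative.ofAdd.injective hjb
    omega
  rw [hi, hj]
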